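/- Every order automorphism f of A^ω has a fixed point u of the following alternating form: f(u) = u, and for every even index i the entry u i lies in the right copy ω₁ and is not the least element of ω₁, while for every odd index i the entry u i lies in the left copy ω₁* and is not the greatest element of ω₁* (i.e., corresponds to a nonzero countable ordinal). That is, u = (α₀, −α₁, α₂, −α₃, …) with all αᵢ ≠ 0. -/

import Mathlib

open Ordinal

/-- `A = ω₁* + ω₁`. -/
abbrev A : Type := Lex ((Ordinal.ToType ω₁)ᵒᵈ ⊕ Ordinal.ToType ω₁)

namespace AFP
open Cardinal Set Function
abbrev I : Type := Ordinal.ToType ω₁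
abbrev P : Type := Lex (ℕ → A)

noncomputable instance : NoMaxOrder I :=
  cast (congrArg (fun o : Ordinal => NoMaxOrder o.ToType) (Cardinal.ord_aleph 1))
    (Cardinal.noMaxOrder (Cardinal.aleph0_le_aleph 1))

instance : Nonempty I := by
  rw [Ordinal.toType_nonempty_iff_ne_zero]
  exact ne_of_gt (lt_of_le_of_lt (zero_le (a := ω)) omega0_lt_omega_one)

lemma mk_Iio_lt (γ : I) : #(Set.Iio γ) < ℵ₁ :=
  (cast (congrArg (fun o : Ordinal => ∀ i : o.ToType, #(Set.Iio i) < Cardinal.aleph 1)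
    (Cardinal.ord_aleph 1)) (fun i => Cardinal.mk_Iio_ord_toType i)) γ

lemma countable_Iic (γ : I) : (Set.Iic γ).Countable := by
  obtain ⟨b, hb⟩ := exists_gt γ
  have : (Set.Iio b).Countable := (Cardinal.countable_iff_lt_aleph_one _).2 (mk_Iio_lt b)
  exact this.mono (fun x hx => lt_of_le_of_lt hx hb)

noncomputable def eIso : Set.Iio ω₁ ≃o I := Ordinal.ToType.mk

lemma omega1_isLimit : Order.IsSuccLimit ω₁ := by
  rw [show ω₁ = (Cardinal.aleph 1).ord from (Cardinal.ord_aleph 1).symm]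
  exact Cardinal.isSuccLimit_ord (Cardinal.aleph0_le_aleph 1)

lemma iSup_lt_omega1 {α : Type} [Countable α] (o : α → Ordinal) (ho : ∀ n, o n < ω₁) :
    iSup o < ω₁ := by
  rw [show ω₁ = (Cardinal.aleph 1).ord from (Cardinal.ord_aleph 1).symm] at *
  rw [Cardinal.ord_aleph] at *; exact Ordinal.iSup_lt_omega_one ho

lemma exists_bound (γ : I) (h h' : I → I) :
    ∃ b : I, γ < b ∧ ∀ x, x ≤ γ → h x < b ∧ h' x < b := by
  classical
  have hc : Countable ↥(Set.Iic γ) := (countable_Iic γ).to_subtype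
  set F : ↥(Set.Iic γ) → Ordinal := fun x => (eIso.symm (h x)).1 with hF
  set F' : ↥(Set.Iic γ) → Ordinal := fun x => (eIso.symm (h' x)).1 with hF'
  have h1 : iSup F < ω₁ := iSup_lt_omega1 F (fun x => (eIso.symm (h x)).2)
  have h2 : iSup F' < ω₁ := iSup_lt_omega1 F' (fun x => (eIso.symm (h' x)).2)
  set O : Ordinal := max (max (iSup F) (iSup F')) (eIso.symm γ).1 + 1 with hO
  have hOlt : O < ω₁ := omega1_isLimit.succ_lt (by
    simp only [max_lt_iff]
    exact ⟨⟨h1, h2⟩, (eIso.symm γ).2⟩)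
  have key : ∀ x : I, (eIso.symm x).1 < O → x < eIso ⟨O, hOlt⟩ := by
    intro x hx
    have : eIso.symm x < ⟨O, hOlt⟩ := Subtype.mk_lt_mk.2 hx
    simpa using eIso.lt_iff_lt.2 this
  refine ⟨eIso ⟨O, hOlt⟩, key γ (lt_of_le_of_lt (le_max_right _ _) (lt_add_one _)), ?_⟩
  intro x hx
  exact ⟨key _ (lt_of_le_of_lt
      (le_trans (le_trans (Ordinal.le_iSup F ⟨x, hx⟩) (le_max_left _ _)) (le_max_left _ _))
      (lt_add_one _)),
    key _ (lt_of_le_of_lt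
      (le_trans (le_trans (Ordinal.le_iSup F' ⟨x, hx⟩) (le_max_right _ _)) (le_max_left _ _))
      (lt_add_one _))⟩

/-- Closure point lemma: for any two functions on `I` there is a "limit" point `δ`
closed under both, with something below it and cofinal elements below it. -/
lemma exists_closure (h h' : I → I) :
    ∃ δ : I, (∃ γ₀, γ₀ < δ) ∧
      ∀ γ, γ < δ → h γ < δ ∧ h' γ < δ ∧ ∃ γ'', γ < γ'' ∧ γ'' < δ := by
  classical
  have step : ∀ γ : I, ∃ b : I, γ < b ∧ ∀ x, x ≤ γ → h x < b ∧ h' x < b := fun γ =>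
    exists_bound γ h h'
  set g : ℕ → I := fun n => Nat.rec (Classical.arbitrary I)
    (fun _ p => Classical.choose (step p)) n with hg
  have hgsucc : ∀ n, g (n+1) = Classical.choose (step (g n)) := fun n => rfl
  have hglt : ∀ n, g n < g (n+1) := fun n => by
    rw [hgsucc]; exact (Classical.choose_spec (step (g n))).1
  have hgbd : ∀ n, ∀ x, x ≤ g n → h x < g (n+1) ∧ h' x < g (n+1) := fun n x hx => by
    rw [hgsucc]; exact (Classical.choose_spec (step (g n))).2 x hx
  -- a strict upper bound for the range of g
  have hub : ∃ b : I, ∀ n, g n < b := by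
    set F : ℕ → Ordinal := fun n => (eIso.symm (g n)).1 with hF
    have h1 : iSup F < ω₁ := iSup_lt_omega1 F (fun n => (eIso.symm (g n)).2)
    have h2 : iSup F + 1 < ω₁ := omega1_isLimit.succ_lt h1
    refine ⟨eIso ⟨iSup F + 1, h2⟩, fun n => ?_⟩
    have : eIso.symm (g n) < ⟨iSup F + 1, h2⟩ :=
      Subtype.mk_lt_mk.2 (lt_of_le_of_lt (Ordinal.le_iSup F n) (lt_add_one _))
    simpa using eIso.lt_iff_lt.2 this
  set S : Set I := {b | ∀ n, g n < b} with hS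
  have hSne : S.Nonempty := hub
  set δ : I := (IsWellFounded.wf (r := ((· < ·) : I → I → Prop))).min S hSne with hδ
  have hδS : δ ∈ S := WellFounded.min_mem _ S hSne
  have hδmin : ∀ y ∈ S, ¬ y < δ := fun y hy => WellFounded.not_lt_min _ S hy
  have key : ∀ γ, γ < δ → ∃ n, γ ≤ g n := by
    intro γ hγ
    by_contra hcon
    push_neg at hcon
    exact hδmin γ (fun n => (hcon n)) hγ
  refine ⟨δ, ⟨g 0, hδS 0⟩, fun γ hγ => ?_⟩
  obtain ⟨n, hn⟩ := key γ hγ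
  exact ⟨lt_trans (hgbd n γ hn).1 (lt_of_lt_of_le (hglt (n+1)) (le_of_lt (hδS (n+2)))),
    lt_trans (hgbd n γ hn).2 (lt_of_lt_of_le (hglt (n+1)) (le_of_lt (hδS (n+2)))),
    g (n+1), lt_of_le_of_lt hn (hglt n), hδS (n+1)⟩


def inrA (γ : I) : A := toLex (Sum.inr γ)
def inlA (γ : I) : A := toLex (Sum.inl (OrderDual.toDual γ))

lemma inrA_lt_inrA {a b : I} : inrA a < inrA b ↔ a < b := Sum.Lex.inr_lt_inr_iff
lemma inlA_lt_inlA {a b : I} : inlA a < inlA b ↔ b < a := by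
  show toLex (Sum.inl (OrderDual.toDual a)) < toLex (Sum.inl (OrderDual.toDual b)) ↔ _
  rw [Sum.Lex.inl_lt_inl_iff]
  exact OrderDual.toDual_lt_toDual
lemma inlA_lt_inrA {a b : I} : inlA a < inrA b := Sum.Lex.inl_lt_inr _ _

lemma exists_inrA_above (a : A) : ∃ γ : I, a < inrA γ := by
  rcases h : ofLex a with b | b <;> have ha : a = toLex (ofLex a) := rfl
  · refine ⟨Classical.arbitrary I, ?_⟩
    rw [ha, h]; exact Sum.Lex.inl_lt_inr _ _
  · obtain ⟨γ, hγ⟩ := exists_gt b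
    refine ⟨γ, ?_⟩
    rw [ha, h]; exact Sum.Lex.inr_lt_inr_iff.2 hγ

lemma exists_inlA_below (a : A) : ∃ γ : I, inlA γ < a := by
  rcases h : ofLex a with b | b <;> have ha : a = toLex (ofLex a) := rfl
  · obtain ⟨γ, hγ⟩ := exists_gt (OrderDual.ofDual b)
    refine ⟨γ, ?_⟩
    rw [ha, h]
    exact Sum.Lex.inl_lt_inl_iff.2 hγ
  · refine ⟨Classical.arbitrary I, ?_⟩
    rw [ha, h]; exact Sum.Lex.inl_lt_inr _ _

/-- `x↾m <lex y↾m` for the finite prefixes. -/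
def PLT (m : ℕ) (x y : ℕ → A) : Prop :=
  ∃ i, i < m ∧ (∀ j, j < i → x j = y j) ∧ x i < y i

lemma not_PLT_self (m : ℕ) (x : ℕ → A) : ¬ PLT m x x := by
  rintro ⟨i, _, _, h⟩; exact lt_irrefl _ h

lemma PLT_congr_left {m : ℕ} {w w' x : ℕ → A} (h : ∀ j, j < m → w j = w' j) :
    PLT m w x ↔ PLT m w' x := by
  constructor <;> rintro ⟨i, him, heq, hlt⟩
  · exact ⟨i, him, fun j hj => (h j (hj.trans him)).symm.trans (heq j hj),
      (h i him) ▸ hlt⟩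
  · exact ⟨i, him, fun j hj => (h j (hj.trans him)).trans (heq j hj),
      (h i him).symm ▸ hlt⟩

lemma PLT_congr_right {m : ℕ} {w w' x : ℕ → A} (h : ∀ j, j < m → w j = w' j) :
    PLT m x w ↔ PLT m x w' := by
  constructor <;> rintro ⟨i, him, heq, hlt⟩
  · exact ⟨i, him, fun j hj => (heq j hj).trans (h j (hj.trans him)),
      (h i him) ▸ hlt⟩
  · exact ⟨i, him, fun j hj => (heq j hj).trans (h j (hj.trans him)).symm,
      (h i him).symm ▸ hlt⟩

lemma lex_lt_iff {v w : P} :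
    v < w ↔ ∃ i, (∀ j, j < i → ofLex v j = ofLex w j) ∧ ofLex v i < ofLex w i := Iff.rfl

variable (f : P ≃o P)

/-- invariance of the "down-set" `{v | ¬ PLT m w v}` (i.e. `{v | v↾m ≤ w↾m}`). -/
def InvD (m : ℕ) (w : ℕ → A) : Prop :=
  ∀ v : P, PLT m w (ofLex (f v)) ↔ PLT m w (ofLex v)

/-- invariance of the "up-set" `{v | ¬ PLT m v w}` (i.e. `{v | v↾m ≥ w↾m}`). -/
def InvU (m : ℕ) (w : ℕ → A) : Prop :=
  ∀ v : P, PLT m (ofLex (f v)) w ↔ PLT m (ofLex v) w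

lemma mk_lt {x y : ℕ → A} (i : ℕ) (heq : ∀ j, j < i → x j = y j) (hlt : x i < y i) :
    toLex x < toLex y := ⟨i, heq, hlt⟩

lemma lt_dest {x y : ℕ → A} (h : toLex x < toLex y) :
    ∃ i, (∀ j, j < i → x j = y j) ∧ x i < y i := h

section Stage
variable {f}

/-- The even-type stage: given an invariant down-set at level `m`, produce `δ` such that
putting `inr δ` at coordinate `m` yields an invariant up-set at level `m+1`. -/
lemma stage_even (m : ℕ) (w : ℕ → A) (hw : InvD f m w) :
    ∃ δ : I, (∃ γ₀, γ₀ < δ) ∧ InvU f (m+1) (Function.update w m (inrA δ)) := by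
  classical
  -- the approximating points
  set W : I → (ℕ → A) :=
    fun γ i => if i < m then w i else if i = m then inrA γ else inrA (Classical.arbitrary I)
    with hW
  have W_lt : ∀ γ j, j < m → W γ j = w j := fun γ j hj => by simp [hW, hj]
  have W_m : ∀ γ, W γ m = inrA γ := fun γ => by simp [hW]
  have memD : ∀ γ, ¬ PLT m w (W γ) := by
    rintro γ ⟨i, him, _, hlt⟩
    rw [W_lt γ i him] at hlt
    exact lt_irrefl _ hlt
  -- cofinality of the family in the down-set
  have cof : ∀ v : P, ¬ PLT m w (ofLex v) → ∃ γ, v < toLex (W γ) := by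
    intro v hv
    by_cases hall : ∀ j, j < m → ofLex v j = w j
    · obtain ⟨γ, hγ⟩ := exists_inrA_above (ofLex v m)
      refine ⟨γ, mk_lt m (fun j hj => (hall j hj).trans (W_lt γ j hj).symm) ?_⟩
      rw [W_m]; exact hγ
    · push_neg at hall
      obtain ⟨j₀, hj₀m, hj₀⟩ := hall
      have hQ : ∃ n, ofLex v n ≠ w n := ⟨j₀, hj₀⟩
      have hspec : ofLex v (Nat.find hQ) ≠ w (Nat.find hQ) := Nat.find_spec hQ
      have him : Nat.find hQ < m := lt_of_le_of_lt (Nat.find_min' hQ hj₀) hj₀m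
      have heq : ∀ j, j < Nat.find hQ → ofLex v j = w j := fun j hj =>
        not_not.1 (Nat.find_min hQ hj)
      have hlt : ofLex v (Nat.find hQ) < w (Nat.find hQ) := by
        rcases lt_trichotomy (ofLex v (Nat.find hQ)) (w (Nat.find hQ)) with h | h | h
        · exact h
        · exact absurd h hspec
        · exact absurd ⟨Nat.find hQ, him, fun j hj => (heq j hj).symm, h⟩ hv
      refine ⟨Classical.arbitrary I,
        mk_lt (Nat.find hQ) (fun j hj => (heq j hj).trans (W_lt _ j (hj.trans him)).symm) ?_⟩
      rw [W_lt _ _ him]; exact hlt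
  -- the two transfer functions
  have memD_f : ∀ γ, ¬ PLT m w (ofLex (f (toLex (W γ)))) := fun γ => by
    rw [hw]; exact memD γ
  have memD_fsymm : ∀ γ, ¬ PLT m w (ofLex (f.symm (toLex (W γ)))) := fun γ => by
    have := hw (f.symm (toLex (W γ)))
    rw [OrderIso.apply_symm_apply] at this
    rw [← this]; exact memD γ
  obtain ⟨δ, ⟨γ₀, hγ₀⟩, hclose⟩ := exists_closure
    (fun γ => Classical.choose (cof _ (memD_f γ)))
    (fun γ => Classical.choose (cof _ (memD_fsymm γ)))
  have hspec1 : ∀ γ, f (toLex (W γ)) < toLex (W (Classical.choose (cof _ (memD_f γ)))) :=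
    fun γ => Classical.choose_spec (cof _ (memD_f γ))
  have hspec2 : ∀ γ, f.symm (toLex (W γ)) < toLex (W (Classical.choose (cof _ (memD_fsymm γ)))) :=
    fun γ => Classical.choose_spec (cof _ (memD_fsymm γ))
  set w' : ℕ → A := Function.update w m (inrA δ) with hw'
  have w'_lt : ∀ j, j < m → w' j = w j := fun j hj => Function.update_of_ne (by omega) _ _
  have w'_m : w' m = inrA δ := Function.update_self _ _ _
  -- the key description of the new up-set's complement
  have Zfor : ∀ v : P, PLT (m+1) (ofLex v) w' ↔ ∃ γ, γ < δ ∧ v < toLex (W γ) := by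
    intro v
    constructor
    · rintro ⟨i, him1, heq, hlt⟩
      rcases Nat.lt_succ_iff_lt_or_eq.1 him1 with him | rfl
      · refine ⟨γ₀, hγ₀, mk_lt i (fun j hj => (heq j hj).trans
          (((w'_lt j (hj.trans him)).trans (W_lt γ₀ j (hj.trans him)).symm))) ?_⟩
        rw [W_lt γ₀ i him]
        rw [w'_lt i him] at hlt
        exact hlt
      · rw [w'_m] at hlt
        have heq' : ∀ γ j, j < i → ofLex v j = W γ j := fun γ j hj =>
          (heq j hj).trans ((w'_lt j hj).trans (W_lt γ j hj).symm)
        rcases hx : ofLex v i with b | b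
        · refine ⟨γ₀, hγ₀, mk_lt i (heq' γ₀) ?_⟩
          show ofLex v i < W γ₀ i
          rw [hx, W_m]
          exact Sum.Lex.inl_lt_inr _ _
        · rw [hx] at hlt
          have hbδ : b < δ := Sum.Lex.inr_lt_inr_iff.1 hlt
          obtain ⟨γ'', hbγ, hγδ⟩ := (hclose b hbδ).2.2
          refine ⟨γ'', hγδ, mk_lt i (heq' γ'') ?_⟩
          show ofLex v i < W γ'' i
          rw [hx, W_m]
          exact Sum.Lex.inr_lt_inr_iff.2 hbγ
    · rintro ⟨γ, hγδ, hv⟩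
      obtain ⟨i, heq, hlt⟩ := lt_dest (x := ofLex v) (y := W γ) hv
      rcases lt_trichotomy i m with him | rfl | him
      · refine ⟨i, by omega, fun j hj => (heq j hj).trans
          ((W_lt γ j (hj.trans him)).trans (w'_lt j (hj.trans him)).symm), ?_⟩
        rw [w'_lt i him]
        rw [W_lt γ i him] at hlt
        exact hlt
      · refine ⟨i, by omega, fun j hj => (heq j hj).trans
          ((W_lt γ j hj).trans (w'_lt j hj).symm), ?_⟩
        rw [w'_m]
        rw [W_m] at hlt
        exact lt_trans hlt (Sum.Lex.inr_lt_inr_iff.2 hγδ)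
      · refine ⟨m, by omega, fun j hj => (heq j (hj.trans him)).trans
          ((W_lt γ j hj).trans (w'_lt j hj).symm), ?_⟩
        rw [w'_m, heq m him, W_m]
        exact Sum.Lex.inr_lt_inr_iff.2 hγδ
  -- conclude invariance
  refine ⟨δ, ⟨γ₀, hγ₀⟩, fun v => ?_⟩
  rw [show PLT (m+1) (ofLex (f v)) w' ↔ _ from Zfor (f v),
    show PLT (m+1) (ofLex v) w' ↔ _ from Zfor v]
  constructor
  · rintro ⟨γ, hγδ, hv⟩
    refine ⟨_, (hclose γ hγδ).2.1, ?_⟩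
    have h1 : v < f.symm (toLex (W γ)) := by
      have := f.symm.lt_iff_lt.2 hv; rwa [OrderIso.symm_apply_apply] at this
    exact lt_trans h1 (hspec2 γ)
  · rintro ⟨γ, hγδ, hv⟩
    refine ⟨_, (hclose γ hγδ).1, ?_⟩
    exact lt_trans (f.lt_iff_lt.2 hv) (hspec1 γ)

/-- The odd-type stage: mirror image of `stage_even`. -/
lemma stage_odd (m : ℕ) (w : ℕ → A) (hw : InvU f m w) :
    ∃ δ : I, (∃ γ₀, γ₀ < δ) ∧ InvD f (m+1) (Function.update w m (inlA δ)) := by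
  classical
  set W : I → (ℕ → A) :=
    fun γ i => if i < m then w i else if i = m then inlA γ else inlA (Classical.arbitrary I)
    with hW
  have W_lt : ∀ γ j, j < m → W γ j = w j := fun γ j hj => by simp [hW, hj]
  have W_m : ∀ γ, W γ m = inlA γ := fun γ => by simp [hW]
  have memU : ∀ γ, ¬ PLT m (W γ) w := by
    rintro γ ⟨i, him, _, hlt⟩
    rw [W_lt γ i him] at hlt
    exact lt_irrefl _ hlt
  -- coinitiality of the family in the up-set
  have coin : ∀ v : P, ¬ PLT m (ofLex v) w → ∃ γ, toLex (W γ) < v := by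
    intro v hv
    by_cases hall : ∀ j, j < m → ofLex v j = w j
    · obtain ⟨γ, hγ⟩ := exists_inlA_below (ofLex v m)
      refine ⟨γ, mk_lt m (fun j hj => (W_lt γ j hj).trans (hall j hj).symm) ?_⟩
      rw [W_m]; exact hγ
    · push_neg at hall
      obtain ⟨j₀, hj₀m, hj₀⟩ := hall
      have hQ : ∃ n, ofLex v n ≠ w n := ⟨j₀, hj₀⟩
      have hspec : ofLex v (Nat.find hQ) ≠ w (Nat.find hQ) := Nat.find_spec hQ
      have him : Nat.find hQ < m := lt_of_le_of_lt (Nat.find_min' hQ hj₀) hj₀m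
      have heq : ∀ j, j < Nat.find hQ → ofLex v j = w j := fun j hj =>
        not_not.1 (Nat.find_min hQ hj)
      have hlt : w (Nat.find hQ) < ofLex v (Nat.find hQ) := by
        rcases lt_trichotomy (ofLex v (Nat.find hQ)) (w (Nat.find hQ)) with h | h | h
        · exact absurd ⟨Nat.find hQ, him, heq, h⟩ hv
        · exact absurd h hspec
        · exact h
      refine ⟨Classical.arbitrary I,
        mk_lt (Nat.find hQ) (fun j hj => (W_lt _ j (hj.trans him)).trans (heq j hj).symm) ?_⟩
      rw [W_lt _ _ him]; exact hlt
  have memU_f : ∀ γ, ¬ PLT m (ofLex (f (toLex (W γ)))) w := fun γ => by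
    rw [hw]; exact memU γ
  have memU_fsymm : ∀ γ, ¬ PLT m (ofLex (f.symm (toLex (W γ)))) w := fun γ => by
    have := hw (f.symm (toLex (W γ)))
    rw [OrderIso.apply_symm_apply] at this
    rw [← this]; exact memU γ
  obtain ⟨δ, ⟨γ₀, hγ₀⟩, hclose⟩ := exists_closure
    (fun γ => Classical.choose (coin _ (memU_f γ)))
    (fun γ => Classical.choose (coin _ (memU_fsymm γ)))
  have hspec1 : ∀ γ, toLex (W (Classical.choose (coin _ (memU_f γ)))) < f (toLex (W γ)) :=
    fun γ => Classical.choose_spec (coin _ (memU_f γ))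
  have hspec2 : ∀ γ, toLex (W (Classical.choose (coin _ (memU_fsymm γ)))) < f.symm (toLex (W γ)) :=
    fun γ => Classical.choose_spec (coin _ (memU_fsymm γ))
  set w' : ℕ → A := Function.update w m (inlA δ) with hw'
  have w'_lt : ∀ j, j < m → w' j = w j := fun j hj => Function.update_of_ne (by omega) _ _
  have w'_m : w' m = inlA δ := Function.update_self _ _ _
  have Zfor : ∀ v : P, PLT (m+1) w' (ofLex v) ↔ ∃ γ, γ < δ ∧ toLex (W γ) < v := by
    intro v
    constructor
    · rintro ⟨i, him1, heq, hlt⟩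
      rcases Nat.lt_succ_iff_lt_or_eq.1 him1 with him | rfl
      · refine ⟨γ₀, hγ₀, mk_lt i (fun j hj =>
          ((W_lt γ₀ j (hj.trans him)).trans (w'_lt j (hj.trans him)).symm).trans (heq j hj)) ?_⟩
        rw [W_lt γ₀ i him]
        rw [w'_lt i him] at hlt
        exact hlt
      · rw [w'_m] at hlt
        have heq' : ∀ γ j, j < i → W γ j = ofLex v j := fun γ j hj =>
          ((W_lt γ j hj).trans (w'_lt j hj).symm).trans (heq j hj)
        rcases hx : ofLex v i with b | b
        · rw [hx] at hlt
          have hbδ' : OrderDual.toDual δ < b :=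
            Sum.Lex.inl_lt_inl_iff.1 (show toLex (Sum.inl (OrderDual.toDual δ)) < toLex (Sum.inl b) from hlt)
          have hbδ : OrderDual.ofDual b < δ := hbδ' 
          obtain ⟨γ'', hbγ, hγδ⟩ := (hclose _ hbδ).2.2
          refine ⟨γ'', hγδ, mk_lt i (heq' γ'') ?_⟩
          show W γ'' i < ofLex v i
          rw [hx, W_m]
          exact Sum.Lex.inl_lt_inl_iff.2 hbγ
        · refine ⟨γ₀, hγ₀, mk_lt i (heq' γ₀) ?_⟩
          show W γ₀ i < ofLex v i
          rw [hx, W_m]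
          exact Sum.Lex.inl_lt_inr _ _
    · rintro ⟨γ, hγδ, hv⟩
      obtain ⟨i, heq, hlt⟩ := lt_dest (x := W γ) (y := ofLex v) hv
      rcases lt_trichotomy i m with him | rfl | him
      · refine ⟨i, by omega, fun j hj =>
          ((w'_lt j (hj.trans him)).trans (W_lt γ j (hj.trans him)).symm).trans (heq j hj), ?_⟩
        rw [w'_lt i him]
        rw [W_lt γ i him] at hlt
        exact hlt
      · refine ⟨i, by omega, fun j hj =>
          ((w'_lt j hj).trans (W_lt γ j hj).symm).trans (heq j hj), ?_⟩
        rw [w'_m]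
        rw [W_m] at hlt
        exact lt_trans (inlA_lt_inlA.2 hγδ) hlt
      · refine ⟨m, by omega, fun j hj =>
          ((w'_lt j hj).trans (W_lt γ j hj).symm).trans (heq j (hj.trans him)), ?_⟩
        rw [w'_m, ← heq m him, W_m]
        exact inlA_lt_inlA.2 hγδ
  refine ⟨δ, ⟨γ₀, hγ₀⟩, fun v => ?_⟩
  rw [show PLT (m+1) w' (ofLex (f v)) ↔ _ from Zfor (f v),
    show PLT (m+1) w' (ofLex v) ↔ _ from Zfor v]
  constructor
  · rintro ⟨γ, hγδ, hv⟩
    refine ⟨_, (hclose γ hγδ).2.1, ?_⟩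
    have h1 : f.symm (toLex (W γ)) < v := by
      have := f.symm.lt_iff_lt.2 hv; rwa [OrderIso.symm_apply_apply] at this
    exact lt_trans (hspec2 γ) h1
  · rintro ⟨γ, hγδ, hv⟩
    refine ⟨_, (hclose γ hγδ).1, ?_⟩
    exact lt_trans (hspec1 γ) (f.lt_iff_lt.2 hv)

end Stage

/-- Parity-dependent invariance condition. -/
def Inv (f : P ≃o P) (m : ℕ) (w : ℕ → A) : Prop :=
  (Even m → InvD f m w) ∧ (Odd m → InvU f m w)

/-- Shape of the chosen coordinate. -/
def FormAt (j : ℕ) (w : ℕ → A) : Prop :=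
  (Even j → ∃ δ : I, (∃ γ₀, γ₀ < δ) ∧ w j = inrA δ) ∧
  (Odd j → ∃ δ : I, (∃ γ₀, γ₀ < δ) ∧ w j = inlA δ)

lemma InvD_congr {f : P ≃o P} {m : ℕ} {w w' : ℕ → A} (h : ∀ j, j < m → w j = w' j)
    (hI : InvD f m w) : InvD f m w' := fun v =>
  (PLT_congr_left h).symm.trans ((hI v).trans (PLT_congr_left h))

lemma InvU_congr {f : P ≃o P} {m : ℕ} {w w' : ℕ → A} (h : ∀ j, j < m → w j = w' j)
    (hI : InvU f m w) : InvU f m w' := fun v =>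
  (PLT_congr_right h).symm.trans ((hI v).trans (PLT_congr_right h))

lemma Inv_congr {f : P ≃o P} {m : ℕ} {w w' : ℕ → A} (h : ∀ j, j < m → w j = w' j)
    (hI : Inv f m w) : Inv f m w' :=
  ⟨fun he => InvD_congr h (hI.1 he), fun ho => InvU_congr h (hI.2 ho)⟩

lemma step (f : P ≃o P) (m : ℕ) (w : ℕ → A) (hI : Inv f m w) :
    ∃ w' : ℕ → A, (∀ j, j < m → w' j = w j) ∧ Inv f (m+1) w' ∧ FormAt m w' := by
  rcases Nat.even_or_odd m with he | ho
  · obtain ⟨δ, hδ, hinv⟩ := stage_even m w (hI.1 he)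
    exact ⟨Function.update w m (inrA δ),
      fun j hj => Function.update_of_ne (by omega) _ _,
      ⟨fun hev => (Nat.even_add_one.1 hev he).elim, fun _ => hinv⟩,
      ⟨fun _ => ⟨δ, hδ, Function.update_self _ _ _⟩,
        fun hodd => ((Nat.not_odd_iff_even.2 he) hodd).elim⟩⟩
  · obtain ⟨δ, hδ, hinv⟩ := stage_odd m w (hI.2 ho)
    exact ⟨Function.update w m (inlA δ),
      fun j hj => Function.update_of_ne (by omega) _ _,
      ⟨fun _ => hinv,
        fun hodd' => ((Nat.not_odd_iff_even.2
          (Nat.even_add_one.2 (Nat.not_even_iff_odd.2 ho))) hodd').elim⟩,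
      ⟨fun hev => ((Nat.not_even_iff_odd.2 ho) hev).elim,
        fun _ => ⟨δ, hδ, Function.update_self _ _ _⟩⟩⟩

/-- The tower of longer and longer invariant prefixes. -/
noncomputable def tower (f : P ≃o P) : (m : ℕ) → {w : ℕ → A // Inv f m w} :=
  Nat.rec
    ⟨fun _ => inrA (Classical.arbitrary I),
      ⟨fun _ v => iff_of_false (by rintro ⟨i, hi, -⟩; exact Nat.not_lt_zero i hi) (by rintro ⟨i, hi, -⟩; exact Nat.not_lt_zero i hi),
       fun _ v => iff_of_false (by rintro ⟨i, hi, -⟩; exact Nat.not_lt_zero i hi) (by rintro ⟨i, hi, -⟩; exact Nat.not_lt_zero i hi)⟩⟩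
    (fun m prev =>
      ⟨Classical.choose (step f m prev.1 prev.2),
        (Classical.choose_spec (step f m prev.1 prev.2)).2.1⟩)

lemma tower_spec (f : P ≃o P) (m : ℕ) :
    (∀ j, j < m → (tower f (m+1)).1 j = (tower f m).1 j) ∧
      Inv f (m+1) (tower f (m+1)).1 ∧ FormAt m (tower f (m+1)).1 :=
  Classical.choose_spec (step f m (tower f m).1 (tower f m).2)

/-- The fixed point. -/
noncomputable def ufun (f : P ≃o P) : ℕ → A := fun i => (tower f (i+1)).1 i

lemma tower_agree (f : P ≃o P) : ∀ m j, j < m → (tower f m).1 j = ufun f j := by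
  intro m
  induction m with
  | zero => intro j hj; omega
  | succ m ih =>
    intro j hj
    rcases lt_trichotomy j m with h | rfl | h
    · exact ((tower_spec f m).1 j h).trans (ih j h)
    · rfl
    · omega

lemma inv_ufun (f : P ≃o P) (m : ℕ) : Inv f m (ufun f) :=
  Inv_congr (fun j hj => tower_agree f m j hj) (tower f m).2

lemma form_ufun (f : P ≃o P) (i : ℕ) : FormAt i (ufun f) := by
  have h := (tower_spec f i).2.2
  have hv : (tower f (i+1)).1 i = ufun f i := rfl
  exact ⟨fun he => by obtain ⟨δ, h1, h2⟩ := h.1 he; exact ⟨δ, h1, hv ▸ h2⟩,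
    fun ho => by obtain ⟨δ, h1, h2⟩ := h.2 ho; exact ⟨δ, h1, hv ▸ h2⟩⟩

lemma fixed (f : P ≃o P) : f (toLex (ufun f)) = toLex (ufun f) := by
  have key : ∀ i, ofLex (f (toLex (ufun f))) i = ufun f i := by
    by_contra hcon
    push_neg at hcon
    obtain ⟨i₀, hi₀⟩ := hcon
    have hQ : ∃ n, ofLex (f (toLex (ufun f))) n ≠ ufun f n := ⟨i₀, hi₀⟩
    have hne : ofLex (f (toLex (ufun f))) (Nat.find hQ) ≠ ufun f (Nat.find hQ) :=
      Nat.find_spec hQ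
    have heq : ∀ j, j < Nat.find hQ → ofLex (f (toLex (ufun f))) j = ufun f j := fun j hj =>
      not_not.1 (Nat.find_min hQ hj)
    rcases lt_trichotomy (ofLex (f (toLex (ufun f))) (Nat.find hQ)) (ufun f (Nat.find hQ))
      with hlt | h | hgt
    · have hodd : Odd (2*(Nat.find hQ)+1) := ⟨Nat.find hQ, by ring⟩
      have hU := ((inv_ufun f (2*(Nat.find hQ)+1)).2 hodd) (toLex (ufun f))
      have hP : PLT (2*(Nat.find hQ)+1) (ofLex (f (toLex (ufun f)))) (ufun f) :=
        ⟨Nat.find hQ, by omega, heq, hlt⟩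
      rw [hU] at hP
      exact not_PLT_self _ _ hP
    · exact hne h
    · have hev : Even (2*(Nat.find hQ)+2) := ⟨Nat.find hQ + 1, by ring⟩
      have hD := ((inv_ufun f (2*(Nat.find hQ)+2)).1 hev) (toLex (ufun f))
      have hP : PLT (2*(Nat.find hQ)+2) (ufun f) (ofLex (f (toLex (ufun f)))) :=
        ⟨Nat.find hQ, by omega, fun j hj => (heq j hj).symm, hgt⟩
      rw [hD] at hP
      exact not_PLT_self _ _ hP
  exact congrArg toLex (funext key)

end AFP

/-- Every order automorphism of `A^ω` (sequences `ℕ → A` ordered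
lexicographically) has a fixed point `u = (α₀, -α₁, α₂, -α₃, …)` whose even
entries lie in the right copy of `ω₁` and are not its least element, and whose
odd entries lie in the left copy `ω₁*` and are not its greatest element. -/
theorem automorphism_fixed_point (f : Lex (ℕ → A) ≃o Lex (ℕ → A)) :
    ∃ u : Lex (ℕ → A), f u = u ∧
      (∀ i : ℕ, Even i →
        ∃ α : Ordinal.ToType ω₁, ¬ IsMin α ∧ ofLex u i = toLex (Sum.inr α)) ∧
      (∀ i : ℕ, Odd i →
        ∃ β : (Ordinal.ToType ω₁)ᵒᵈ, ¬ IsMax β ∧ ofLex u i = toLex (Sum.inl β)) := by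
  
  refine ⟨toLex (AFP.ufun f), AFP.fixed f, fun i hi => ?_, fun i hi => ?_⟩
  · obtain ⟨δ, ⟨γ₀, hγ₀⟩, hval⟩ := (AFP.form_ufun f i).1 hi
    exact ⟨δ, fun hmin => hγ₀.not_ge (hmin hγ₀.le), hval⟩
  · obtain ⟨δ, ⟨γ₀, hγ₀⟩, hval⟩ := (AFP.form_ufun f i).2 hi
    exact ⟨OrderDual.toDual δ,
      fun hmax => hγ₀.not_ge (hmax (show OrderDual.toDual δ ≤ OrderDual.toDual γ₀ from hγ₀.le)),
      hval⟩
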